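/- arXiv:2003.00589 — 3 statements merged into one kernel-verified Lean document; each statement's English description precedes it below -/
import Mathlib

section
/- Define ℓ_n recursively by ℓ_0 = 3 and ℓ_{n+1} = 1 + Σ_{j=0}^{n} (-1)^j * binom(ℓ_{n-j}, j+2). Then for each fixed n ≥ 0, the terms binom(ℓ_{n-j}, j+2) occurring in this sum are nonincreasing as j runs from 0 to n. -/
lemma aux_choose_two (m : ℕ) : 2 * (m+1).choose 2 = (m+1) * m := by
  induction m with
  | zero => rfl
  | succ k ih =>
    rw [Nat.choose_succ_succ (k+1) 1, Nat.mul_add, ih, Nat.choose_one_right]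
    ring

lemma two_mul_choose_two (n : ℕ) : 2 * n.choose 2 = n * (n-1) := by
  rcases n with _|m
  · rfl
  · simpa using aux_choose_two m

lemma aux_choose_three (m : ℕ) : 6 * (m+2).choose 3 = (m+2) * (m+1) * m := by
  induction m with
  | zero => rfl
  | succ k ih =>
    rw [Nat.choose_succ_succ (k+2) 2, Nat.mul_add, ih]
    have h2 := aux_choose_two (k+1)
    rw [show k+1+1 = k+2 from rfl] at h2
    rw [show 6 * (k+2).choose 2 = 3 * (2 * (k+2).choose 2) by ring, h2]
    ring

lemma six_mul_choose_three (n : ℕ) : 6 * n.choose 3 = n * (n-1) * (n-2) := by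
  rcases n with _|_|m
  · rfl
  · rfl
  · simpa using aux_choose_three m

lemma choose_step (a b k : ℕ) (hab : a ≤ b) (h4 : a*(a-1) ≤ 4*b) (hk : 2 ≤ k) :
    a.choose (k+1) ≤ b.choose k := by
  induction k, hk using Nat.le_induction with
  | base =>
    show a.choose 3 ≤ b.choose 2
    rcases Nat.lt_or_ge a 3 with h|h
    · rw [Nat.choose_eq_zero_of_lt h]; exact Nat.zero_le _
    · have h6 : a * (a-1) * (a-2) ≤ 3 * (b * (b-1)) := by
        have h1 : (1:ℕ) ≤ a := by omega
        have h2 : (2:ℕ) ≤ a := by omega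
        have hb1 : (1:ℕ) ≤ b := by omega
        zify [h1, h2, hb1]
        have hx : (3:ℤ) ≤ (a:ℤ) := by exact_mod_cast h
        have hy : (a:ℤ) ≤ b := by exact_mod_cast hab
        have h4' : (a:ℤ)*((a:ℤ)-1) ≤ 4*(b:ℤ) := by
          have := h4; zify [h1] at this; linarith
        have h5 : 4*(a:ℤ) ≤ 3*(b:ℤ) + 5 := by
          rcases le_or_gt (a:ℤ) 5 with hc|hc
          · linarith
          · nlinarith
        nlinarith [mul_le_mul_of_nonneg_right h4' (by linarith : (0:ℤ) ≤ (a:ℤ)-2),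
          mul_le_mul_of_nonneg_left (by linarith : 4*((a:ℤ)-2) ≤ 3*((b:ℤ)-1)) (by linarith : (0:ℤ) ≤ (b:ℤ))]
      have e3 : 6 * a.choose 3 = a*(a-1)*(a-2) := six_mul_choose_three a
      have e2 : 2 * b.choose 2 = b*(b-1) := two_mul_choose_two b
      omega
  | succ k hk ih =>
    have key : a.choose (k+2) * ((k+2)*(k+1)) ≤ b.choose (k+1) * ((k+2)*(k+1)) := by
      have l1 : a.choose (k+2) * (k+2) = a.choose (k+1) * (a - (k+1)) :=
        Nat.choose_succ_right_eq a (k+1)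
      have l2 : b.choose (k+1) * (k+1) = b.choose k * (b - k) :=
        Nat.choose_succ_right_eq b k
      calc a.choose (k+2) * ((k+2)*(k+1)) = (a.choose (k+2) * (k+2)) * (k+1) := by ring
        _ = (a.choose (k+1) * (a - (k+1))) * (k+1) := by rw [l1]
        _ ≤ (b.choose k * (b - k)) * (k+2) :=
            Nat.mul_le_mul (Nat.mul_le_mul ih (by omega)) (by omega)
        _ = (b.choose (k+1) * (k+1)) * (k+2) := by rw [l2]
        _ = b.choose (k+1) * ((k+2)*(k+1)) := by ring
    exact Nat.le_of_mul_le_mul_right key (by positivity)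

lemma alt_peel (n : ℕ) (t : ℕ → ℤ) : ∑ j ∈ Finset.range (n+2), (-1)^j * t j
    = t 0 - ∑ j ∈ Finset.range (n+1), (-1)^j * t (j+1) := by
  rw [Finset.sum_range_succ' (fun j => (-1:ℤ)^j * t j) (n+1)]
  simp only [pow_succ, pow_zero, one_mul]
  have : ∀ i ∈ Finset.range (n+1), (-1:ℤ)^i * (-1) * t (i+1) = -((-1)^i * t (i+1)) :=
    fun i _ => by ring
  rw [Finset.sum_congr rfl this, Finset.sum_neg_distrib]
  ring

lemma alt_bounds (n : ℕ) : ∀ t : ℕ → ℤ, (∀ j, j ≤ n → 0 ≤ t j) →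
    (∀ i j, i ≤ j → j ≤ n → t j ≤ t i) →
    0 ≤ ∑ j ∈ Finset.range (n+1), (-1)^j * t j ∧
      ∑ j ∈ Finset.range (n+1), (-1)^j * t j ≤ t 0 := by
  induction n with
  | zero =>
    intro t h1 _
    simpa using h1 0 (le_refl 0)
  | succ m ih =>
    intro t h1 h2
    obtain ⟨l, u⟩ := ih (fun j => t (j+1)) (fun j hj => h1 (j+1) (by omega))
      (fun i j hij hj => h2 (i+1) (j+1) (by omega) (by omega))
    rw [alt_peel m t]
    have ht10 : t 1 ≤ t 0 := h2 0 1 (by omega) (by omega)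
    rw [show (0:ℕ)+1 = 1 from rfl] at u
    constructor
    · linarith
    · linarith

lemma alt_lower (n : ℕ) (t : ℕ → ℤ) (h1 : ∀ j, j ≤ n+1 → 0 ≤ t j)
    (h2 : ∀ i j, i ≤ j → j ≤ n+1 → t j ≤ t i) :
    t 0 - t 1 ≤ ∑ j ∈ Finset.range (n+2), (-1)^j * t j := by
  obtain ⟨_, u⟩ := alt_bounds n (fun j => t (j+1)) (fun j hj => h1 (j+1) (by omega))
    (fun i j hij hj => h2 (i+1) (j+1) (by omega) (by omega))
  rw [alt_peel n t]
  rw [show (0:ℕ)+1 = 1 from rfl] at u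
  linarith

lemma antitone_of_adj (f : ℕ → ℕ) (n : ℕ) (adj : ∀ p, p+1 ≤ n → f (p+1) ≤ f p) :
    ∀ i j, i ≤ j → j ≤ n → f j ≤ f i := by
  intro i j hij hjn
  induction j with
  | zero => have : i = 0 := by omega
            subst this; exact le_refl _
  | succ m ih =>
    rcases Nat.eq_or_lt_of_le hij with h|h
    · subst h; exact le_refl _
    · exact le_trans (adj m hjn) (ih (by omega) (by omega))

lemma ineq1 (x y : ℕ) (h48 : 48 ≤ x) (hxy : x ≤ y) (hq : x*(x-1) ≤ 4*y) :
    x.choose 3 + y ≤ 1 + y.choose 2 := by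
  have e3 := six_mul_choose_three x
  have e2 := two_mul_choose_two y
  have key : x*(x-1)*(x-2) + 6*y ≤ 6 + 3*(y*(y-1)) := by
    have h1 : (1:ℕ) ≤ x := by omega
    have h2 : (2:ℕ) ≤ x := by omega
    have hy1 : (1:ℕ) ≤ y := by omega
    zify [h1, h2, hy1] at hq ⊢
    have hX : (48:ℤ) ≤ (x:ℤ) := by exact_mod_cast h48
    have hY : (x:ℤ) ≤ (y:ℤ) := by exact_mod_cast hxy
    have h5 : 4*(x:ℤ) + 1 ≤ 3*(y:ℤ) := by nlinarith
    nlinarith [mul_le_mul_of_nonneg_right hq (by linarith : (0:ℤ) ≤ (x:ℤ)-2),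
      mul_le_mul_of_nonneg_left (by linarith : 4*((x:ℤ)-2)+6 ≤ 3*((y:ℤ)-1)) (by linarith : (0:ℤ) ≤ (y:ℤ))]
  omega

lemma ineq2 (x y : ℕ) (h48 : 48 ≤ x) (hxy : x ≤ y) (hq : x*(x-1) ≤ 4*y) :
    2 * x.choose 3 ≤ 2 + y.choose 2 := by
  have e3 := six_mul_choose_three x
  have e2 := two_mul_choose_two y
  have key : 2*(x*(x-1)*(x-2)) ≤ 12 + 3*(y*(y-1)) := by
    have h1 : (1:ℕ) ≤ x := by omega
    have h2 : (2:ℕ) ≤ x := by omega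
    have hy1 : (1:ℕ) ≤ y := by omega
    zify [h1, h2, hy1] at hq ⊢
    have hX : (48:ℤ) ≤ (x:ℤ) := by exact_mod_cast h48
    have hY : (x:ℤ) ≤ (y:ℤ) := by exact_mod_cast hxy
    have h5 : 8*(x:ℤ) ≤ 3*(y:ℤ) + 13 := by nlinarith
    nlinarith [mul_le_mul_of_nonneg_right hq (by linarith : (0:ℤ) ≤ (x:ℤ)-2),
      mul_le_mul_of_nonneg_left (by linarith : 8*((x:ℤ)-2) ≤ 3*((y:ℤ)-1)) (by linarith : (0:ℤ) ≤ (y:ℤ))]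
  omega

theorem ell_terms_antitone (ℓ : ℕ → ℤ) (h0 : ℓ 0 = 3)
    (hrec : ∀ n : ℕ, ℓ (n + 1) =
      1 + ∑ j ∈ Finset.range (n + 1), (-1) ^ j * ((ℓ (n - j)).toNat.choose (j + 2) : ℤ)) (n : ℕ) :
    ∀ i j : ℕ, i ≤ j → j ≤ n →
      (ℓ (n - j)).toNat.choose (j + 2) ≤ (ℓ (n - i)).toNat.choose (i + 2) := by
  have e1 : ℓ 1 = 4 := by
    have h := hrec 0; simp [Finset.sum_range_succ, h0] at h; exact h
  have e2 : ℓ 2 = 6 := by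
    have h := hrec 1; simp [Finset.sum_range_succ, h0, e1] at h; norm_num [Nat.choose] at h; exact h
  have e3 : ℓ 3 = 12 := by
    have h := hrec 2; simp [Finset.sum_range_succ, h0, e1, e2] at h; norm_num [Nat.choose] at h; exact h
  have e4 : ℓ 4 = 48 := by
    have h := hrec 3; simp [Finset.sum_range_succ, h0, e1, e2, e3] at h; norm_num [Nat.choose] at h; exact h
  have e5 : ℓ 5 = 924 := by
    have h := hrec 4; simp [Finset.sum_range_succ, h0, e1, e2, e3, e4] at h; norm_num [Nat.choose] at h; exact h
  suffices H : ∀ n : ℕ, (∀ i j : ℕ, i ≤ j → j ≤ n →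
      (ℓ (n - j)).toNat.choose (j + 2) ≤ (ℓ (n - i)).toNat.choose (i + 2)) ∧
      3 ≤ ℓ n ∧ ℓ n ≤ ℓ (n+1) ∧ ℓ n * (ℓ n - 1) ≤ 4 * ℓ (n+1) ∧ (4 ≤ n → 48 ≤ ℓ n) by
    exact (H n).1
  intro n
  induction n using Nat.strong_induction_on with
  | _ n IH =>
  -- Part 1: antitone at level n
  have hA : ∀ i j : ℕ, i ≤ j → j ≤ n →
      (ℓ (n - j)).toNat.choose (j + 2) ≤ (ℓ (n - i)).toNat.choose (i + 2) := by
    apply antitone_of_adj (fun q => (ℓ (n - q)).toNat.choose (q+2)) n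
    intro p hp
    obtain ⟨q, hq1, hq2⟩ : ∃ q, n - (p+1) = q ∧ n - p = q + 1 := ⟨n - p - 1, by omega, by omega⟩
    have hm : q < n := by omega
    obtain ⟨_, h3, hmono, hquad, _⟩ := IH q hm
    rw [hq1, hq2]
    set a := (ℓ q).toNat with ha
    set b := (ℓ (q + 1)).toNat with hb
    have hca : (a:ℤ) = ℓ q := Int.toNat_of_nonneg (by linarith)
    have hcb : (b:ℤ) = ℓ (q + 1) := Int.toNat_of_nonneg (by linarith)
    have hab : a ≤ b := by
      have : (a:ℤ) ≤ (b:ℤ) := by rw [hca, hcb]; exact hmono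
      exact_mod_cast this
    have ha1 : 1 ≤ a := by
      have : (3:ℤ) ≤ (a:ℤ) := by rw [hca]; exact h3
      omega
    have h4 : a*(a-1) ≤ 4*b := by
      zify [ha1]
      rw [hca, hcb]
      linarith
    exact choose_step a b (p+2) hab h4 (by omega)
  refine ⟨hA, ?_⟩
  rcases Nat.lt_or_ge n 5 with hn|hn
  · -- small cases by explicit values
    clear hA IH hrec
    interval_cases n <;>
      · refine ⟨?_, ?_, ?_, ?_⟩ <;> simp only [h0, e1, e2, e3, e4, e5] <;> norm_num
  · -- big case
    obtain ⟨m, rfl⟩ : ∃ m, n = m + 5 := ⟨n - 5, by omega⟩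
    obtain ⟨_, h3p, hmonop, hquadp, h48p⟩ := IH (m+4) (by omega)
    have h48 : (48:ℤ) ≤ ℓ (m+4) := h48p (by omega)
    set t : ℕ → ℤ := fun j => ((ℓ (m+5 - j)).toNat.choose (j+2) : ℤ) with ht
    have hnn : ∀ j, j ≤ m+5 → 0 ≤ t j := fun j _ => Int.ofNat_nonneg _
    have hmn : ∀ i j, i ≤ j → j ≤ m+5 → t j ≤ t i := by
      intro i j hij hj
      simp only [ht]
      exact_mod_cast hA i j hij hj
    have hlow := alt_lower (m+4) t (fun j hj => hnn j (by omega))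
      (fun i j hij hj => hmn i j hij (by omega))
    rw [show m+4+2 = m+5+1 by omega] at hlow
    have hr := hrec (m+5)
    have hL : t 0 - t 1 ≤ ℓ (m+5+1) - 1 := by rw [hr]; linarith
    set x := (ℓ (m+4)).toNat with hx
    set y := (ℓ (m+5)).toNat with hy
    have hcx : (x:ℤ) = ℓ (m+4) := Int.toNat_of_nonneg (by linarith)
    have hcy : (y:ℤ) = ℓ (m+5) := Int.toNat_of_nonneg (by linarith)
    have ht0 : t 0 = (y.choose 2 : ℤ) := by
      simp only [ht]
      norm_num
      rfl
    have ht1 : t 1 = (x.choose 3 : ℤ) := by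
      simp only [ht]
      rw [show m+5-1 = m+4 by omega]
    have hx48 : 48 ≤ x := by
      have : (48:ℤ) ≤ (x:ℤ) := by rw [hcx]; exact h48
      exact_mod_cast this
    have hxy : x ≤ y := by
      have : (x:ℤ) ≤ (y:ℤ) := by rw [hcx, hcy]; exact hmonop
      exact_mod_cast this
    have hq : x*(x-1) ≤ 4*y := by
      zify [show 1 ≤ x by omega]
      rw [hcx, hcy]
      linarith
    have k1 := ineq1 x y hx48 hxy hq
    have k2 := ineq2 x y hx48 hxy hq
    have k1' : (x.choose 3 : ℤ) + (y:ℤ) ≤ 1 + (y.choose 2 : ℤ) := by exact_mod_cast k1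
    have k2' : 2*(x.choose 3 : ℤ) ≤ 2 + (y.choose 2 : ℤ) := by exact_mod_cast k2
    have e2y : 2*(y.choose 2 : ℤ) = (y:ℤ)*((y:ℤ)-1) := by
      have := two_mul_choose_two y
      zify [show 1 ≤ y by omega] at this
      exact_mod_cast this
    refine ⟨by linarith [hcx, hcy, h48, hmonop], ?_, ?_, fun _ => by linarith⟩
    · -- ℓ (m+5) ≤ ℓ (m+5+1)
      rw [ht0, ht1] at hL
      rw [← hcy]
      linarith
    · -- quadratic bound
      rw [ht0, ht1] at hL
      rw [← hcy]
      nlinarith [hL, k2', e2y]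
end

section
/- Define ℓ_n recursively by ℓ_0 = 3 and ℓ_{n+1} = 1 + Σ_{j=0}^{n} (-1)^j * binom(ℓ_{n-j}, j+2). Then lim_{n→∞} ℓ_{n+1}/ℓ_n² = 1/2. -/
open Filter

theorem chooseval (n k v f d : ℕ) (hd : n.descFactorial k = d) (hf : k.factorial = f)
    (h : f * v = d) : n.choose k = v := by
  have h2 := Nat.descFactorial_eq_factorial_mul_choose n k
  rw [hd, hf] at h2
  have hf0 : 0 < f := by rw [← hf]; exact Nat.factorial_pos k
  exact Nat.eq_of_mul_eq_mul_left hf0 (by omega)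

theorem choose2mul (m : ℕ) : 2 * m.choose 2 = m * (m - 1) := by
  induction m with
  | zero => rfl
  | succ k ih =>
    rw [Nat.choose_succ_succ k 1, Nat.mul_add, ih, Nat.choose_one_right]
    cases k with
    | zero => rfl
    | succ j =>
      simp only [Nat.succ_sub_one, Nat.add_sub_cancel]
      ring

theorem factbound3 : ∀ j, 3 ≤ j → 3^j * 4^(j+2) ≤ 29 * 2^j * Nat.factorial (j+2) := by
  intro j hj
  induction j, hj using Nat.le_induction with
  | base => norm_num [Nat.factorial]
  | succ j hj ih =>
    have hf : Nat.factorial (j+1+2) = (j+3) * Nat.factorial (j+2) := rfl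
    have h6 : 6 * Nat.factorial (j+2) ≤ (j+3) * Nat.factorial (j+2) :=
      Nat.mul_le_mul_right _ (by omega)
    calc 3^(j+1) * 4^(j+1+2) = 12 * (3^j * 4^(j+2)) := by ring
    _ ≤ 12 * (29 * 2^j * Nat.factorial (j+2)) := Nat.mul_le_mul_left _ ih
    _ = 29 * 2^(j+1) * (6 * Nat.factorial (j+2)) := by ring
    _ ≤ 29 * 2^(j+1) * ((j+3) * Nat.factorial (j+2)) := Nat.mul_le_mul_left _ h6
    _ = 29 * 2^(j+1) * Nat.factorial (j+1+2) := by rw [hf]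

theorem factbound : ∀ j, 1 ≤ j → 3^j * 4^(j+2) ≤ 29 * 2^j * Nat.factorial (j+2) := by
  intro j hj
  by_cases h3 : 3 ≤ j
  · exact factbound3 j h3
  · interval_cases j <;> norm_num [Nat.factorial]

theorem geo : ∀ n : ℕ, (∑ j ∈ Finset.range n, 2^j * 3^(n-1-j)) + 2^n ≤ 3^n := by
  intro n
  induction n with
  | zero => simp
  | succ n ih =>
    rw [Finset.sum_range_succ]
    have e1 : ∀ j ∈ Finset.range n, 2^j * 3^(n+1-1-j) = 3 * (2^j * 3^(n-1-j)) := by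
      intro j hj
      rw [Finset.mem_range] at hj
      rw [show n+1-1-j = (n-1-j)+1 by omega, pow_succ]
      ring
    rw [Finset.sum_congr rfl e1, ← Finset.mul_sum, show n+1-1-n = 0 by omega]
    rw [pow_succ 3 n, pow_succ 2 n]
    have := ih
    nlinarith [this]

theorem mono_le {α : Type*} [Preorder α] (f : ℕ → α) (n : ℕ)
    (h : ∀ k, k < n → f k < f (k+1)) :
    ∀ a b, a ≤ b → b ≤ n → f a ≤ f b := by
  have key : ∀ a d, a + d ≤ n → f a ≤ f (a + d) := by
    intro a d
    induction d with
    | zero => simp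
    | succ d ih =>
      intro hle
      exact le_trans (ih (by omega)) (le_of_lt (h (a+d) (by omega)))
  intro a b hab hbn
  have := key a (b - a) (by omega)
  rwa [show a + (b - a) = b by omega] at this

theorem Qlem (L : ℕ → ℕ) (n : ℕ)
    (hL1 : ∀ k, k < n → 1 ≤ L k)
    (hmono : ∀ k, k < n → L k < L (k+1))
    (hsq : ∀ k, k + 1 < n → L k ^ 2 ≤ 4 * L (k+1)) :
    ∀ j, 1 ≤ j → j ≤ n → L (n-j) ^ (j+2) ≤ 4^(j+2) * L (n-1) ^ 3 := by
  intro j hj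
  induction j, hj using Nat.le_induction with
  | base =>
    intro h1n
    exact Nat.le_mul_of_pos_left _ (by positivity)
  | succ j hj ih =>
    intro hjn
    have ihj := ih (by omega)
    have hM1 : 1 ≤ L (n-1) := hL1 _ (by omega)
    have hidx : n - (j+1) + 1 = n - j := by omega
    have hsq' : L (n-(j+1)) ^ 2 ≤ 4 * L (n-j) := by
      have := hsq (n-(j+1)) (by omega)
      rwa [hidx] at this
    have hmono' : L (n-j) ≤ L (n-1) :=
      mono_le L n hmono (n-j) (n-1) (by omega) (by omega)
    have hLM : L (n-1) ≤ L (n-1) ^ 3 := by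
      calc L (n-1) = L (n-1) ^ 1 := (pow_one _).symm
      _ ≤ L (n-1) ^ 3 := Nat.pow_le_pow_right hM1 (by omega)
    have key : (L (n-(j+1)) ^ (j+3)) ^ 2 ≤ (4^(j+3) * L (n-1) ^ 3) ^ 2 := by
      calc (L (n-(j+1)) ^ (j+3)) ^ 2 = (L (n-(j+1)) ^ 2) ^ (j+3) := by
            rw [← pow_mul, ← pow_mul, Nat.mul_comm]
      _ ≤ (4 * L (n-j)) ^ (j+3) := Nat.pow_le_pow_left hsq' _
      _ = 4^(j+3) * (L (n-j) ^ (j+2) * L (n-j)) := by rw [mul_pow, ← pow_succ]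
      _ ≤ 4^(j+3) * ((4^(j+2) * L (n-1) ^ 3) * L (n-1) ^ 3) :=
            Nat.mul_le_mul_left _ (Nat.mul_le_mul ihj (le_trans hmono' hLM))
      _ ≤ 4^(j+3) * ((4^(j+3) * L (n-1) ^ 3) * L (n-1) ^ 3) := by
            have h4 : (4:ℕ)^(j+2) ≤ 4^(j+3) := Nat.pow_le_pow_right (by norm_num) (by omega)
            exact Nat.mul_le_mul_left _ (Nat.mul_le_mul (Nat.mul_le_mul_right _ h4) le_rfl)
      _ = (4^(j+3) * L (n-1) ^ 3) ^ 2 := by ring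
    have := (Nat.pow_le_pow_iff_left (two_ne_zero)).mp key
    simpa using this

theorem tailbound (L : ℕ → ℕ) (n : ℕ) (hn : 1 ≤ n)
    (hL1 : ∀ k, k < n → 1 ≤ L k)
    (hmono : ∀ k, k < n → L k < L (k+1))
    (hsq : ∀ k, k + 1 < n → L k ^ 2 ≤ 4 * L (k+1)) :
    ∑ j ∈ Finset.range n, (L (n-(j+1))).choose (j+1+2) ≤ 58 * L (n-1) ^ 3 := by
  set M := L (n-1) ^ 3 with hM
  have hpt : ∀ j, j < n → (L (n-(j+1))).choose (j+1+2) * 3^(j+1) ≤ 29 * 2^(j+1) * M := by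
    intro j hjn
    set c := (L (n-(j+1))).choose (j+1+2) with hc
    have hd : Nat.factorial (j+1+2) * c ≤ L (n-(j+1)) ^ (j+1+2) := by
      rw [hc, ← Nat.descFactorial_eq_factorial_mul_choose]
      exact Nat.descFactorial_le_pow _ _
    have hQ : L (n-(j+1)) ^ (j+1+2) ≤ 4^(j+1+2) * M :=
      Qlem L n hL1 hmono hsq (j+1) (by omega) (by omega)
    have hF : 3^(j+1) * 4^(j+1+2) ≤ 29 * 2^(j+1) * Nat.factorial (j+1+2) :=
      factbound (j+1) (by omega)
    have step : c * 3^(j+1) * 4^(j+1+2) ≤ 29 * 2^(j+1) * M * 4^(j+1+2) := by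
      calc c * 3^(j+1) * 4^(j+1+2) = c * (3^(j+1) * 4^(j+1+2)) := by ring
      _ ≤ c * (29 * 2^(j+1) * Nat.factorial (j+1+2)) := Nat.mul_le_mul_left _ hF
      _ = 29 * 2^(j+1) * (Nat.factorial (j+1+2) * c) := by ring
      _ ≤ 29 * 2^(j+1) * (L (n-(j+1)) ^ (j+1+2)) := Nat.mul_le_mul_left _ hd
      _ ≤ 29 * 2^(j+1) * (4^(j+1+2) * M) := Nat.mul_le_mul_left _ hQ
      _ = 29 * 2^(j+1) * M * 4^(j+1+2) := by ring
    exact Nat.le_of_mul_le_mul_right step (by positivity)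
  have hsum : (∑ j ∈ Finset.range n, (L (n-(j+1))).choose (j+1+2)) * 3^n
      ≤ (58 * M) * 3^n := by
    rw [Finset.sum_mul]
    have e : ∀ j ∈ Finset.range n,
        (L (n-(j+1))).choose (j+1+2) * 3^n
          = ((L (n-(j+1))).choose (j+1+2) * 3^(j+1)) * 3^(n-1-j) := by
      intro j hj
      rw [Finset.mem_range] at hj
      rw [mul_assoc, ← pow_add, show j+1+(n-1-j) = n by omega]
    rw [Finset.sum_congr rfl e]
    calc ∑ j ∈ Finset.range n, ((L (n-(j+1))).choose (j+1+2) * 3^(j+1)) * 3^(n-1-j)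
        ≤ ∑ j ∈ Finset.range n, (29 * 2^(j+1) * M) * 3^(n-1-j) := by
          apply Finset.sum_le_sum
          intro j hj
          rw [Finset.mem_range] at hj
          exact Nat.mul_le_mul_right _ (hpt j hj)
    _ = (58 * M) * ∑ j ∈ Finset.range n, 2^j * 3^(n-1-j) := by
          rw [Finset.mul_sum]
          apply Finset.sum_congr rfl
          intro j hj
          rw [pow_succ]
          ring
    _ ≤ (58 * M) * 3^n := Nat.mul_le_mul_left _ (le_trans (Nat.le_add_right _ _) (geo n))
  exact Nat.le_of_mul_le_mul_right hsum (by positivity)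

theorem keybound (ℓ : ℕ → ℤ)
    (hrec : ∀ n : ℕ, ℓ (n + 1) =
      1 + ∑ j ∈ Finset.range (n + 1), (-1) ^ j * ((ℓ (n - j)).toNat.choose (j + 2) : ℤ))
    (n : ℕ) (hn : 1 ≤ n)
    (h3 : ∀ k, k ≤ n → 3 ≤ ℓ k)
    (hmono : ∀ k, k < n → ℓ k < ℓ (k+1))
    (hsq : ∀ k, k < n → ℓ k ^ 2 ≤ 4 * ℓ (k+1)) :
    |2 * ℓ (n+1) - 2 - ℓ n * (ℓ n - 1)| ≤ 116 * ℓ (n-1) ^ 3 := by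
  have hc : ∀ k, k ≤ n → (((ℓ k).toNat : ℤ)) = ℓ k := fun k hk =>
    Int.toNat_of_nonneg (by linarith [h3 k hk])
  have hL1 : ∀ k, k < n → 1 ≤ (ℓ k).toNat := by
    intro k hk
    have h := h3 k (le_of_lt hk)
    have h2 := hc k (le_of_lt hk)
    omega
  have hmonoL : ∀ k, k < n → (ℓ k).toNat < (ℓ (k+1)).toNat := by
    intro k hk
    have h1 := hc k (le_of_lt hk)
    have h2 := hc (k+1) hk
    have := hmono k hk
    omega
  have hsqL : ∀ k, k + 1 < n → (ℓ k).toNat ^ 2 ≤ 4 * (ℓ (k+1)).toNat := by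
    intro k hk
    have h1 := hc k (by omega)
    have h2 := hc (k+1) (by omega)
    have h := hsq k (by omega)
    have : (((ℓ k).toNat : ℤ)) ^ 2 ≤ 4 * (((ℓ (k+1)).toNat : ℤ)) := by rw [h1, h2]; exact h
    exact_mod_cast this
  have htail := tailbound (fun k => (ℓ k).toNat) n hn hL1 hmonoL hsqL
  have h := hrec n
  rw [Finset.sum_range_succ'] at h
  have e : ℓ (n+1) - 1 - (((ℓ n).toNat.choose 2 : ℕ) : ℤ)
      = ∑ k ∈ Finset.range n, (-1)^(k+1) * (((ℓ (n-(k+1))).toNat.choose (k+1+2) : ℕ) : ℤ) := by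
    rw [h]; norm_num
  have habs1 : |ℓ (n+1) - 1 - (((ℓ n).toNat.choose 2 : ℕ) : ℤ)| ≤ 58 * ℓ (n-1)^3 := by
    rw [e]
    calc |∑ k ∈ Finset.range n, (-1)^(k+1) * (((ℓ (n-(k+1))).toNat.choose (k+1+2) : ℕ) : ℤ)|
        ≤ ∑ k ∈ Finset.range n, |(-1)^(k+1) * (((ℓ (n-(k+1))).toNat.choose (k+1+2) : ℕ) : ℤ)| :=
          Finset.abs_sum_le_sum_abs _ _
    _ = ∑ k ∈ Finset.range n, (((ℓ (n-(k+1))).toNat.choose (k+1+2) : ℕ) : ℤ) := by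
        apply Finset.sum_congr rfl
        intro k hk
        rw [abs_mul, abs_pow, abs_neg, abs_one, one_pow, one_mul,
          abs_of_nonneg (Int.natCast_nonneg _)]
    _ = ((∑ k ∈ Finset.range n, (ℓ (n-(k+1))).toNat.choose (k+1+2) : ℕ) : ℤ) := by
        push_cast
        rfl
    _ ≤ ((58 * (ℓ (n-1)).toNat ^ 3 : ℕ) : ℤ) := by exact_mod_cast htail
    _ = 58 * ℓ (n-1)^3 := by
        push_cast
        rw [hc (n-1) (by omega)]
  have h2c : 2 * (((ℓ n).toNat.choose 2 : ℕ) : ℤ) = ℓ n * (ℓ n - 1) := by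
    have hch := choose2mul (ℓ n).toNat
    have hcn := hc n le_rfl
    have h3n := h3 n le_rfl
    have h1n : 1 ≤ (ℓ n).toNat := by omega
    have : ((2 * (ℓ n).toNat.choose 2 : ℕ) : ℤ)
        = (((ℓ n).toNat * ((ℓ n).toNat - 1) : ℕ) : ℤ) := by exact_mod_cast congrArg (fun x : ℕ => (x : ℤ)) hch
    push_cast [Nat.cast_sub h1n] at this
    rw [hcn] at this
    exact this
  rw [show 2 * ℓ (n+1) - 2 - ℓ n * (ℓ n - 1)
      = 2 * (ℓ (n+1) - 1 - (((ℓ n).toNat.choose 2 : ℕ) : ℤ)) from by rw [← h2c]; ring]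
  rw [abs_mul]
  norm_num
  linarith [habs1]

theorem invariant (ℓ : ℕ → ℤ) (h0 : ℓ 0 = 3)
    (hrec : ∀ n : ℕ, ℓ (n + 1) =
      1 + ∑ j ∈ Finset.range (n + 1), (-1) ^ j * ((ℓ (n - j)).toNat.choose (j + 2) : ℤ)) :
    ∀ n, 3 ≤ ℓ n ∧ ℓ n < ℓ (n+1) ∧ ℓ n ^ 2 ≤ 4 * ℓ (n+1) ∧ ℓ (n+1) ≤ ℓ n ^ 2 := by
  have c32 : Nat.choose 3 2 = 3 := chooseval _ _ _ _ _ rfl rfl rfl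
  have c42 : Nat.choose 4 2 = 6 := chooseval _ _ _ _ _ rfl rfl rfl
  have c33 : Nat.choose 3 3 = 1 := chooseval _ _ _ _ _ rfl rfl rfl
  have c62 : Nat.choose 6 2 = 15 := chooseval _ _ _ _ _ rfl rfl rfl
  have c43 : Nat.choose 4 3 = 4 := chooseval _ _ _ _ _ rfl rfl rfl
  have c34 : Nat.choose 3 4 = 0 := chooseval _ _ _ _ _ rfl rfl rfl
  have c122 : Nat.choose 12 2 = 66 := chooseval _ _ _ _ _ rfl rfl rfl
  have c63 : Nat.choose 6 3 = 20 := chooseval _ _ _ _ _ rfl rfl rfl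
  have c44 : Nat.choose 4 4 = 1 := chooseval _ _ _ _ _ rfl rfl rfl
  have c35 : Nat.choose 3 5 = 0 := chooseval _ _ _ _ _ rfl rfl rfl
  have c482 : Nat.choose 48 2 = 1128 := chooseval _ _ _ _ _ rfl rfl rfl
  have c123 : Nat.choose 12 3 = 220 := chooseval _ _ _ _ _ rfl rfl rfl
  have c64 : Nat.choose 6 4 = 15 := chooseval _ _ _ _ _ rfl rfl rfl
  have c45 : Nat.choose 4 5 = 0 := chooseval _ _ _ _ _ rfl rfl rfl
  have c36 : Nat.choose 3 6 = 0 := chooseval _ _ _ _ _ rfl rfl rfl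
  have c9242 : Nat.choose 924 2 = 426426 := chooseval _ _ _ _ _ rfl rfl rfl
  have c483 : Nat.choose 48 3 = 17296 := chooseval _ _ _ _ _ rfl rfl rfl
  have c124 : Nat.choose 12 4 = 495 := chooseval _ _ _ _ _ rfl rfl rfl
  have c65 : Nat.choose 6 5 = 6 := chooseval _ _ _ _ _ rfl rfl rfl
  have c46 : Nat.choose 4 6 = 0 := chooseval _ _ _ _ _ rfl rfl rfl
  have c37 : Nat.choose 3 7 = 0 := chooseval _ _ _ _ _ rfl rfl rfl
  have cL62 : Nat.choose 409620 2 = 83894067390 := chooseval _ _ _ _ _ rfl rfl rfl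
  have c9243 : Nat.choose 924 3 = 131054924 := chooseval _ _ _ _ _ rfl rfl rfl
  have c484 : Nat.choose 48 4 = 194580 := chooseval _ _ _ _ _ rfl rfl rfl
  have c125 : Nat.choose 12 5 = 792 := chooseval _ _ _ _ _ rfl rfl rfl
  have c66 : Nat.choose 6 6 = 1 := chooseval _ _ _ _ _ rfl rfl rfl
  have c47 : Nat.choose 4 7 = 0 := chooseval _ _ _ _ _ rfl rfl rfl
  have c38 : Nat.choose 3 8 = 0 := chooseval _ _ _ _ _ rfl rfl rfl
  have v0 : ℓ 0 = 3 := h0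
  have v1 : ℓ 1 = 4 := by
    rw [hrec 0]; simp [Finset.sum_range_succ, v0, c32]
  have v2 : ℓ 2 = 6 := by
    rw [hrec 1]; simp [Finset.sum_range_succ, v0, v1, c42, c33]
  have v3 : ℓ 3 = 12 := by
    rw [hrec 2]; simp [Finset.sum_range_succ, v0, v1, v2, c62, c43, c34]
  have v4 : ℓ 4 = 48 := by
    rw [hrec 3]; simp [Finset.sum_range_succ, v0, v1, v2, v3, c122, c63, c44, c35]
  have v5 : ℓ 5 = 924 := by
    rw [hrec 4]; simp [Finset.sum_range_succ, v0, v1, v2, v3, v4, c482, c123, c64, c45, c36]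
  have v6 : ℓ 6 = 409620 := by
    rw [hrec 5]; simp [Finset.sum_range_succ, v0, v1, v2, v3, v4, v5, c9242, c483, c124, c65,
      c46, c37]
  have v7 : ℓ 7 = 83763206256 := by
    rw [hrec 6]; simp [Finset.sum_range_succ, v0, v1, v2, v3, v4, v5, v6, cL62, c9243, c484,
      c125, c66, c47, c38]
  intro n
  induction n using Nat.strong_induction_on with
  | _ n ih =>
  by_cases hn7 : n ≤ 6
  · interval_cases n <;>
      (refine ⟨?_, ?_, ?_, ?_⟩ <;> simp only [v0, v1, v2, v3, v4, v5, v6, v7] <;> norm_num)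
  · push_neg at hn7
    have hn1 : n - 1 + 1 = n := by omega
    have h3all : ∀ k, k ≤ n → 3 ≤ ℓ k := by
      intro k hk
      rcases Nat.lt_or_ge k n with h | h
      · exact (ih k h).1
      · have hkn : k = n := by omega
        rw [hkn]
        have := (ih (n-1) (by omega)).2.1
        have h3' := (ih (n-1) (by omega)).1
        rw [hn1] at this
        linarith
    have hmonoall : ∀ k, k < n → ℓ k < ℓ (k+1) := fun k hk => (ih k hk).2.1
    have hsqall : ∀ k, k < n → ℓ k ^ 2 ≤ 4 * ℓ (k+1) := fun k hk => (ih k hk).2.2.1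
    have hkey := keybound ℓ hrec n (by omega) h3all hmonoall hsqall
    set A := ℓ (n-1) with hA
    set B := ℓ n with hB
    have hAB : A < B := by
      have := (ih (n-1) (by omega)).2.1
      rwa [hn1] at this
    have hsqAB : A ^ 2 ≤ 4 * B := by
      have := (ih (n-1) (by omega)).2.2.1
      rwa [hn1] at this
    have hBA : B ≤ A ^ 2 := by
      have := (ih (n-1) (by omega)).2.2.2
      rwa [hn1] at this
    have hAbig : 409620 ≤ A := by
      have := mono_le ℓ n hmonoall 6 (n-1) (by omega) (by omega)
      rw [v6] at this
      exact this
    rw [abs_le] at hkey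
    have hA0 : (0:ℤ) < A := by linarith
    have hB0 : (0:ℤ) < B := by linarith
    have hexp : B * (B - 1) = B ^ 2 - B := by ring
    have hA1 : (1:ℤ) ≤ A := by linarith
    have hA3' : (3:ℤ) ≤ A := by linarith
    have h16 : A ^ 4 ≤ 16 * B ^ 2 := by
      calc A ^ 4 = (A^2)^2 := by ring
      _ ≤ (4*B)^2 := pow_le_pow_left₀ (sq_nonneg A) hsqAB 2
      _ = 16 * B ^ 2 := by ring
    have hA43 : 409620 * A ^ 3 ≤ A ^ 4 := by
      have := mul_le_mul_of_nonneg_right hAbig (pow_nonneg hA0.le 3)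
      calc 409620 * A ^ 3 ≤ A * A ^ 3 := this
      _ = A ^ 4 := by ring
    have hA23 : A ^ 2 ≤ A ^ 3 := by
      calc A ^ 2 = A ^ 2 * 1 := by ring
      _ ≤ A ^ 2 * A := mul_le_mul_of_nonneg_left hA1 (sq_nonneg A)
      _ = A ^ 3 := by ring
    have hA9 : 9 ≤ A ^ 2 := by
      calc (9:ℤ) = 3 * 3 := by norm_num
      _ ≤ A * A := mul_le_mul hA3' hA3' (by norm_num) hA0.le
      _ = A ^ 2 := by ring
    have hmain : 232 * A ^ 3 + 3 * A ^ 2 ≤ B ^ 2 := by linarith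
    refine ⟨h3all n le_rfl, ?_, ?_, ?_⟩
    · linarith [hkey.1, hmain, hBA, hA23, hexp]
    · linarith [hkey.1, hmain, hBA, hA23, hexp]
    · linarith [hkey.2, hmain, hA23, hA9, hexp, pow_pos hA0 3]

theorem ell_ratio_tendsto (ℓ : ℕ → ℤ) (h0 : ℓ 0 = 3)
    (hrec : ∀ n : ℕ, ℓ (n + 1) =
      1 + ∑ j ∈ Finset.range (n + 1), (-1) ^ j * ((ℓ (n - j)).toNat.choose (j + 2) : ℤ)) :
    Tendsto (fun n : ℕ => (ℓ (n + 1) : ℝ) / (ℓ n : ℝ) ^ 2) atTop (nhds (1 / 2)) := by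
  have hinv := invariant ℓ h0 hrec
  have hge : ∀ n : ℕ, (n : ℤ) + 3 ≤ ℓ n := by
    intro n
    induction n with
    | zero => simp [h0]
    | succ k ih =>
      have := (hinv k).2.1
      push_cast
      push_cast at ih
      linarith
  have hbound : ∀ n : ℕ, 1 ≤ n → |(ℓ (n+1) : ℝ) / (ℓ n : ℝ)^2 - 1/2| ≤ 929 / (n:ℝ) := by
    intro n hn
    have hn1 : n - 1 + 1 = n := by omega
    have hkey := keybound ℓ hrec n hn (fun k _ => (hinv k).1)
      (fun k _ => (hinv k).2.1) (fun k _ => (hinv k).2.2.1)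
    rw [abs_le] at hkey
    have hAB : ℓ (n-1) < ℓ n := by have := (hinv (n-1)).2.1; rwa [hn1] at this
    have hsqAB : ℓ (n-1) ^ 2 ≤ 4 * ℓ n := by have := (hinv (n-1)).2.2.1; rwa [hn1] at this
    have hA3 : 3 ≤ ℓ (n-1) := (hinv (n-1)).1
    have hAn : (n : ℤ) + 2 ≤ ℓ (n-1) := by
      have h := hge (n-1)
      rw [Nat.cast_sub hn] at h
      push_cast at h
      linarith
    -- pass to ℝ
    set x : ℝ := ((ℓ (n-1) : ℤ) : ℝ) with hxdef
    set y : ℝ := ((ℓ n : ℤ) : ℝ) with hydef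
    set z : ℝ := ((ℓ (n+1) : ℤ) : ℝ) with hzdef
    have hk1 : -(116 * x^3) ≤ 2*z - 2 - y*(y-1) := by
      rw [hxdef, hydef, hzdef]; exact_mod_cast hkey.1
    have hk2 : 2*z - 2 - y*(y-1) ≤ 116 * x^3 := by
      rw [hxdef, hydef, hzdef]; exact_mod_cast hkey.2
    have hx3 : (3:ℝ) ≤ x := by rw [hxdef]; exact_mod_cast hA3
    have hxy : x ≤ y := by rw [hxdef, hydef]; exact_mod_cast le_of_lt hAB
    have hx2 : x^2 ≤ 4*y := by rw [hxdef, hydef]; exact_mod_cast hsqAB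
    have hnx : (n:ℝ) + 2 ≤ x := by rw [hxdef]; exact_mod_cast hAn
    have hy0 : (0:ℝ) < y := by linarith
    have hn0 : (0:ℝ) < n := by exact_mod_cast hn
    have heq : z / y^2 - 1/2 = (2*z - y^2) / (2*y^2) := by
      field_simp
    rw [heq, abs_div, abs_of_pos (show (0:ℝ) < 2*y^2 by positivity)]
    rw [div_le_div_iff₀ (by positivity) hn0]
    have hnum : |2*z - y^2| ≤ 116*x^3 + y := by
      rw [abs_le]
      constructor <;> nlinarith [hk1, hk2]
    have h16 : x^4 ≤ 16*y^2 := by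
      calc x^4 = (x^2)^2 := by ring
      _ ≤ (4*y)^2 := pow_le_pow_left₀ (sq_nonneg x) hx2 2
      _ = 16*y^2 := by ring
    have e1 : (n:ℝ) * x^3 ≤ x^4 := by
      have hn_le_x : (n:ℝ) ≤ x := by linarith
      calc (n:ℝ) * x^3 ≤ x * x^3 := mul_le_mul_of_nonneg_right hn_le_x (by positivity)
      _ = x^4 := by ring
    have e2 : (n:ℝ) * y ≤ y^2 := by
      have hn_le_y : (n:ℝ) ≤ y := by linarith
      calc (n:ℝ) * y ≤ y * y := mul_le_mul_of_nonneg_right hn_le_y (by linarith)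
      _ = y^2 := by ring
    calc |2*z - y^2| * n ≤ (116*x^3 + y) * n :=
        mul_le_mul_of_nonneg_right hnum (by positivity)
    _ = 116 * ((n:ℝ) * x^3) + (n:ℝ)*y := by ring
    _ ≤ 116 * x^4 + y^2 := by linarith
    _ ≤ 116 * (16*y^2) + y^2 := by linarith
    _ ≤ 929 * (2*y^2) := by nlinarith [sq_nonneg y]
  have ht1 : Tendsto (fun n : ℕ => (ℓ (n+1) : ℝ) / (ℓ n : ℝ)^2 - 1/2) atTop (nhds 0) := by
    apply squeeze_zero_norm' _ (tendsto_const_div_atTop_nhds_zero_nat 929)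
    filter_upwards [eventually_ge_atTop 1] with n hn
    simpa [Real.norm_eq_abs] using hbound n hn
  have ht2 := ht1.add (tendsto_const_nhds : Tendsto (fun _ : ℕ => (1/2:ℝ)) atTop (nhds (1/2)))
  simpa using ht2
end

section
/- Define ℓ_n recursively by ℓ_0 = 3 and ℓ_{n+1} = 1 + Σ_{j=0}^{n} (-1)^j * binom(ℓ_{n-j}, j+2). Then for all n ≥ 1, ℓ_{n+1} = Σ_{j=1}^{n+1} (-1)^(j+1) * binom(ℓ_{n-j+1} + 1, j+1). -/
open Finset

lemma alt_nonneg : ∀ (m : ℕ) (f : ℕ → ℤ), (∀ j, 0 ≤ f j) →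
    (∀ j, f (j+1) ≤ f j) → 0 ≤ ∑ j ∈ range m, (-1)^j * f j := by
  intro m
  induction m using Nat.strong_induction_on with
  | _ m ih =>
    intro f h0 hm
    match m with
    | 0 => simp
    | 1 => simpa using h0 0
    | (m+2) =>
      rw [Finset.sum_range_succ', Finset.sum_range_succ']
      have h1 : 0 ≤ ∑ j ∈ range m, (-1)^j * f (j+2) :=
        ih m (by omega) (fun j => f (j+2)) (fun j => h0 _) (fun j => hm _)
      have h2 : ∀ j : ℕ, ((-1:ℤ))^(j+1+1) = (-1)^j := by
        intro j; rw [pow_succ, pow_succ]; ring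
      have h3 : (∑ j ∈ range m, (-1)^(j+1+1) * f (j+1+1)) = ∑ j ∈ range m, (-1)^j * f (j+2) := by
        refine Finset.sum_congr rfl fun j _ => by rw [h2]
      rw [h3]
      have := hm 0
      simp only [pow_succ, pow_zero]
      nlinarith [h0 0, h0 1]

lemma alt_ge (f : ℕ → ℤ) (h0 : ∀ j, 0 ≤ f j) (hm : ∀ j, f (j+1) ≤ f j) (m : ℕ) :
    f 0 - f 1 ≤ ∑ j ∈ range (m+2), (-1)^j * f j := by
  rw [Finset.sum_range_succ', Finset.sum_range_succ']
  have h1 : 0 ≤ ∑ j ∈ range m, (-1)^j * f (j+2) :=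
    alt_nonneg m (fun j => f (j+2)) (fun j => h0 _) (fun j => hm _)
  have h3 : (∑ j ∈ range m, (-1)^(j+1+1) * f (j+1+1)) = ∑ j ∈ range m, (-1)^j * f (j+2) := by
    refine Finset.sum_congr rfl fun j _ => by rw [pow_succ, pow_succ]; ring
  rw [h3]
  simp only [pow_succ, pow_zero]
  nlinarith [h1]

lemma c2 (n : ℕ) : 2 * n.choose 2 + n = n * n := by
  induction n with
  | zero => rfl
  | succ n ih =>
    rw [Nat.choose_succ_succ, Nat.choose_one_right]
    nlinarith [ih]

lemma c3 (n : ℕ) : 6 * n.choose 3 + 3 * (n * n) = n * n * n + 2 * n := by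
  induction n with
  | zero => rfl
  | succ n ih =>
    rw [Nat.choose_succ_succ]
    have := c2 n
    nlinarith [ih, c2 n]


lemma choose_key {a b : ℕ} (hb : 20 ≤ b) (hba : b * b ≤ 4 * a) :
    ∀ k, 2 ≤ k → b.choose (k+1) ≤ a.choose k := by
  intro k hk
  set q := b / 4 with hq
  have hq5 : 5 ≤ q := by omega
  have h4q : 4 * q ≤ b := by omega
  have hqb : q * b ≤ a := by nlinarith
  have hb4 : b ≤ 4 * q + 3 := by omega
  have hbq2 : b ≤ q * q := by nlinarith
  have hdF : ∀ j, q ^ j * b.descFactorial j ≤ a.descFactorial j := by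
    intro j
    induction j with
    | zero => simp
    | succ j ihj =>
      rw [Nat.descFactorial_succ, Nat.descFactorial_succ]
      have h1 : q * (b - j) ≤ a - j := by
        have e1 : q * (b - j) = q * b - q * j := Nat.mul_sub_left_distrib q b j
        have e2 : j ≤ q * j := Nat.le_mul_of_pos_left j (by omega)
        omega
      calc q ^ (j+1) * ((b - j) * b.descFactorial j)
          = (q * (b-j)) * (q^j * b.descFactorial j) := by ring
        _ ≤ (a - j) * a.descFactorial j := Nat.mul_le_mul h1 ihj
  have hqk : b ≤ q ^ k := by
    calc b ≤ q * q := hbq2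
    _ = q ^ 2 := by ring
    _ ≤ q ^ k := Nat.pow_le_pow_right (by omega) hk
  have hmain : b.descFactorial (k+1) ≤ a.descFactorial k := by
    calc b.descFactorial (k+1) = (b - k) * b.descFactorial k := Nat.descFactorial_succ b k
    _ ≤ q ^ k * b.descFactorial k := Nat.mul_le_mul_right _ (by omega)
    _ ≤ a.descFactorial k := hdF k
  rw [Nat.descFactorial_eq_factorial_mul_choose, Nat.descFactorial_eq_factorial_mul_choose] at hmain
  have hf : (k).factorial * b.choose (k+1) ≤ (k).factorial * a.choose k := by
    calc (k).factorial * b.choose (k+1) ≤ (k+1).factorial * b.choose (k+1) :=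
      Nat.mul_le_mul_right _ (Nat.factorial_le (by omega))
    _ ≤ (k).factorial * a.choose k := hmain
  exact Nat.le_of_mul_le_mul_left hf (Nat.factorial_pos k)


lemma quadlem (b A C3 : ℕ) (k1 : b*b ≤ 4*A) (hb : 48 ≤ b)
    (hc : 6 * C3 + 3 * (b*b) = b*b*b + 2*b) : 8 * C3 ≤ A * A := by
  have hbb := Nat.mul_le_mul k1 k1
  have hb3 : 48 * (b*(b*b)) ≤ b * (b*(b*b)) := Nat.mul_le_mul_right _ hb
  have hb1 : b ≤ b * (b*b) := Nat.le_mul_of_pos_right b (by positivity)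
  nlinarith [hbb, hb3, hb1, hc]

lemma Ifin {b a : ℕ} (h : ∀ k, 2 ≤ k → k ≤ b → b.choose (k+1) ≤ a.choose k) :
    ∀ k, 2 ≤ k → b.choose (k+1) ≤ a.choose k := by
  intro k hk
  rcases le_or_gt k b with h' | h'
  · exact h k hk h'
  · simp [Nat.choose_eq_zero_of_lt (by omega : b < k + 1)]

lemma ell_inv (ℓ : ℕ → ℤ) (h0 : ℓ 0 = 3)
    (hrec : ∀ n : ℕ, ℓ (n + 1) =
      1 + ∑ j ∈ Finset.range (n + 1), (-1) ^ j * ((ℓ (n - j)).toNat.choose (j + 2) : ℤ)) :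
    ∀ m : ℕ, 0 ≤ ℓ (m+1) ∧
      (∀ k, 2 ≤ k → ((ℓ m).toNat.choose (k+1)) ≤ ((ℓ (m+1)).toNat.choose k)) ∧
      (3 ≤ m → 48 ≤ ℓ (m+1) ∧
        8 * ((ℓ m).toNat.choose 3) ≤ (ℓ (m+1)).toNat * (ℓ (m+1)).toNat ∧
        (ℓ m).toNat * (ℓ m).toNat ≤ 4 * (ℓ (m+1)).toNat) := by
  have h1 : ℓ 1 = 4 := by rw [hrec 0]; simp [Finset.sum_range_succ, h0]; try decide
  have h2 : ℓ 2 = 6 := by rw [hrec 1]; simp [Finset.sum_range_succ, h0, h1]; try decide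
  have h3 : ℓ 3 = 12 := by rw [hrec 2]; simp [Finset.sum_range_succ, h0, h1, h2]; try decide
  have h4 : ℓ 4 = 48 := by rw [hrec 3]; simp [Finset.sum_range_succ, h0, h1, h2, h3]; try decide
  intro m
  induction m using Nat.strong_induction_on with
  | _ m ih =>
    match m with
    | 0 =>
      refine ⟨by rw [h1]; norm_num, ?_, by omega⟩
      rw [h0, h1]
      exact Ifin (by decide)
    | 1 =>
      refine ⟨by rw [h2]; norm_num, ?_, by omega⟩
      rw [h1, h2]
      exact Ifin (by decide)
    | 2 =>
      refine ⟨by rw [h3]; norm_num, ?_, by omega⟩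
      rw [h2, h3]
      exact Ifin (by decide)
    | 3 =>
      refine ⟨by rw [h4]; norm_num, ?_, ?_⟩
      · rw [h3, h4]
        exact Ifin (by decide)
      · intro _
        rw [h3, h4]
        constructor <;> decide
    | (p+4) =>
      -- notation
      set m := p + 4 with hm
      have hnn : ∀ i, i ≤ m → 0 ≤ ℓ i := by
        intro i hi
        match i with
        | 0 => rw [h0]; norm_num
        | (t+1) => exact (ih t (by omega)).1
      -- previous invariant at m-1 = p+3
      obtain ⟨hply, hplI, hplQ⟩ := ih (p+3) (by omega)
      obtain ⟨hb48, hbc3, hbc4⟩ := hplQ (by omega)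
      -- ℓ (p+3+1) = ℓ m
      have hb48' : (48:ℤ) ≤ ℓ m := by exact_mod_cast hb48
      set b := (ℓ m).toNat with hbdef
      have hbZ : ((b:ℤ)) = ℓ m := Int.toNat_of_nonneg (by linarith)
      have hb48n : 48 ≤ b := by omega
      -- the alternating sum function
      set f : ℕ → ℤ := fun j => (((ℓ (m - j)).toNat.choose (j+2) : ℕ) : ℤ) with hf
      have hfnn : ∀ j, 0 ≤ f j := fun j => by positivity
      have hfmono : ∀ j, f (j+1) ≤ f j := by
        intro j
        rcases le_or_gt (j+1) m with hj | hj
        · have e1 : m - j = (m - (j+1)) + 1 := by omega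
          have := (ih (m - (j+1)) (by omega)).2.1 (j+2) (by omega)
          rw [← e1] at this
          simp only [hf]
          have e2 : j + 1 + 2 = j + 2 + 1 := by omega
          rw [e2]
          exact_mod_cast this
        · have e0 : m - j = 0 := by omega
          have e1 : m - (j+1) = 0 := by omega
          simp only [hf, e0, e1, h0]
          norm_num
          rw [Nat.choose_eq_zero_of_lt (by omega), Nat.choose_eq_zero_of_lt (by omega)]
      -- lower bound for ℓ (m+1)
      have hlow : 1 + (f 0 - f 1) ≤ ℓ (m+1) := by
        have := alt_ge f hfnn hfmono (p+3)
        rw [hrec m]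
        have e : p + 3 + 2 = m + 1 := by omega
        rw [e] at this
        linarith
      -- f 0 = choose b 2 , f 1 = choose (ℓ (p+3)).toNat 3
      have hf0 : f 0 = ((b.choose 2 : ℕ) : ℤ) := by simp [hf, hbdef]
      have hf1 : f 1 = (((ℓ (p+3)).toNat.choose 3 : ℕ) : ℤ) := by
        have e : m - 1 = p + 3 := by omega
        simp only [hf, e]
      -- quadratic growth
      have hc2b := c2 b
      have key1 : (b:ℤ) * b ≤ 4 * ℓ (m+1) := by
        have hfc2 : 2 * f 0 + (b:ℤ) = (b:ℤ) * b := by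
          rw [hf0]; exact_mod_cast congrArg (fun x : ℕ => (x:ℤ)) hc2b
        have hfc3 : 8 * f 1 ≤ (b:ℤ) * b := by
          rw [hf1]; exact_mod_cast hbc3
        nlinarith [hlow, hb48']
      have hbZ48 : (48:ℤ) ≤ (b:ℤ) := by rw [hbZ]; exact hb48'
      have hly : (0:ℤ) ≤ ℓ (m+1) := by nlinarith [key1, hbZ48]
      set A := (ℓ (m+1)).toNat with hA
      have hAZ : ((A:ℤ)) = ℓ (m+1) := Int.toNat_of_nonneg hly
      have key1n : b * b ≤ 4 * A := by
        have : ((b*b : ℕ):ℤ) ≤ ((4*A : ℕ):ℤ) := by push_cast; rw [hAZ]; exact_mod_cast key1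
        exact_mod_cast this
      have h48A : (48:ℤ) ≤ ℓ (m+1) := by nlinarith [key1, hbZ48]
      refine ⟨hly, ?_, fun _ => ⟨h48A, ?_, key1n⟩⟩
      · exact choose_key (by omega) key1n
      · exact quadlem b A _ key1n hb48n (c3 b)


theorem ell_alt_recursion (ℓ : ℕ → ℤ) (h0 : ℓ 0 = 3)
    (hrec : ∀ n : ℕ, ℓ (n + 1) =
      1 + ∑ j ∈ Finset.range (n + 1), (-1) ^ j * ((ℓ (n - j)).toNat.choose (j + 2) : ℤ)) (n : ℕ) (hn : 1 ≤ n) :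
    ℓ (n + 1) = ∑ j ∈ Finset.Icc 1 (n + 1),
      (-1) ^ (j + 1) * (((ℓ (n + 1 - j) + 1).toNat.choose (j + 1) : ℤ)) := by
  have hnn : ∀ m, 0 ≤ ℓ m := by
    intro m
    match m with
    | 0 => rw [h0]; norm_num
    | (t+1) => exact (ell_inv ℓ h0 hrec t).1
  -- convert Icc to range
  have hIcc : Finset.Icc 1 (n+1) = Finset.Ico 1 (n+2) := by
    rw [← Finset.Ico_add_one_right_eq_Icc]; rfl
  rw [hIcc, Finset.sum_Ico_eq_sum_range]
  have hlen : n + 2 - 1 = n + 1 := by omega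
  rw [hlen]
  -- rewrite each term
  have hterm : ∀ i ∈ Finset.range (n+1),
      (-1:ℤ) ^ (1 + i + 1) * (((ℓ (n + 1 - (1 + i)) + 1).toNat.choose (1 + i + 1) : ℤ))
      = (-1)^i * ((ℓ (n - i)).toNat.choose (i+2) : ℤ)
        + (-1)^i * ((ℓ (n - i)).toNat.choose (i+1) : ℤ) := by
    intro i hi
    have hin : i ≤ n := by simpa [Nat.lt_succ_iff] using hi
    have e1 : n + 1 - (1 + i) = n - i := by omega
    have e2 : (ℓ (n - i) + 1).toNat = (ℓ (n - i)).toNat + 1 := by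
      have := hnn (n - i); omega
    have e3 : 1 + i + 1 = i + 2 := by omega
    rw [e1, e2, e3]
    rw [Nat.choose_succ_succ]
    have e4 : (-1:ℤ) ^ (i + 2) = (-1)^i := by rw [pow_succ, pow_succ]; ring
    push_cast
    rw [e4]
    ring
  rw [Finset.sum_congr rfl hterm, Finset.sum_add_distrib]
  -- first sum = ℓ (n+1) - 1
  have hA : ∑ i ∈ Finset.range (n+1), (-1:ℤ)^i * ((ℓ (n - i)).toNat.choose (i+2) : ℤ)
      = ℓ (n+1) - 1 := by
    rw [hrec n]; ring
  -- second sum = 1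
  obtain ⟨t, rfl⟩ : ∃ t, n = t + 1 := ⟨n - 1, by omega⟩
  have hB : ∑ i ∈ Finset.range (t+1+1), (-1:ℤ)^i * ((ℓ (t+1 - i)).toNat.choose (i+1) : ℤ)
      = 1 := by
    rw [Finset.sum_range_succ']
    have e5 : ∀ i ∈ Finset.range (t+1),
        (-1:ℤ)^(i+1) * ((ℓ (t+1 - (i+1))).toNat.choose (i+1+1) : ℤ)
        = -((-1)^i * ((ℓ (t - i)).toNat.choose (i+2) : ℤ)) := by
      intro i hi
      have e6 : t + 1 - (i+1) = t - i := by omega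
      have e7 : i + 1 + 1 = i + 2 := by omega
      rw [e6, e7, pow_succ]
      ring
    rw [Finset.sum_congr rfl e5, Finset.sum_neg_distrib]
    have hrt := hrec t
    have e8 : ((ℓ (t+1)).toNat.choose 1 : ℤ) = ℓ (t+1) := by
      rw [Nat.choose_one_right, Int.toNat_of_nonneg (hnn (t+1))]
    simp only [pow_zero, one_mul, Nat.sub_zero]
    rw [e8]
    have : ∑ i ∈ Finset.range (t+1), (-1:ℤ)^i * ((ℓ (t - i)).toNat.choose (i+2) : ℤ)
        = ℓ (t+1) - 1 := by rw [hrt]; ring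
    rw [this]
    ring
  rw [hA, hB]
  ring
end
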